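/- Let I ⊆ ℝ be a compact interval, and let d : [1,∞) × I → [0,∞) be a measurable function such that: (a) for θ in a set P of positive Lebesgue measure, limsup_{T→∞} d(T,θ) > 0; (b) there exist ε, δ > 0 and a positive measure subset P_ε ⊆ P such that for each θ ∈ P_ε there is a sequence T_n(θ) → ∞ with d(T,θ) ≥ ε/2 for all T ∈ [(1−δ)T_n(θ), (1+δ)T_n(θ)]. Then there exists a sequence of compactly supported absolutely continuous probability measures π_n on [1,∞) × I, converging to the Dirac mass at infinity of the one-point compactification, such that liminf_n π_n({(T,θ) : d(T,θ) ≥ ε/2}) > 0. -/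

import Mathlib

open MeasureTheory Filter
open scoped ENNReal

theorem stmt13 (c d : ℝ) (hcd : c < d)
    (dfun : ℝ → ℝ → ℝ) (hdmeas : Measurable fun p : ℝ × ℝ => dfun p.1 p.2)
    (P : Set ℝ) (hPmeas : MeasurableSet P) (hPsub : P ⊆ Set.Icc c d)
    (hPpos : 0 < volume P)
    (ha : ∀ θ ∈ P, 0 < Filter.limsup (fun T : ℝ => dfun T θ) atTop)
    (ε δ : ℝ) (hε : 0 < ε) (hδ : 0 < δ)
    (Pε : Set ℝ) (hPεmeas : MeasurableSet Pε) (hPεsub : Pε ⊆ P) (hPεpos : 0 < volume Pε)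
    (hb : ∀ θ ∈ Pε, ∃ Tn : ℕ → ℝ, Tendsto Tn atTop atTop ∧
      ∀ n, ∀ T ∈ Set.Icc ((1 - δ) * Tn n) ((1 + δ) * Tn n), ε / 2 ≤ dfun T θ) :
    ∃ π : ℕ → Measure (ℝ × ℝ), (∀ n, IsProbabilityMeasure (π n)) ∧
      (∀ n, π n ≪ volume) ∧
      (∀ n, ∃ M : ℝ, π n (Set.Icc 1 M ×ˢ Set.Icc c d) = 1) ∧
      (∀ M : ℝ, Tendsto (fun n => π n (Set.Icc 1 M ×ˢ Set.Icc c d)) atTop (nhds 0)) ∧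
      0 < Filter.liminf (fun n => π n {p : ℝ × ℝ | ε / 2 ≤ dfun p.1 p.2}) atTop := by
  classical
  clear ha hPpos
  -- set up constants
  set δ' : ℝ := min δ (1/2) with hδ'def
  have hδ'pos : 0 < δ' := lt_min hδ (by norm_num)
  have hδ'le : δ' ≤ 1/2 := min_le_right _ _
  have hδ'leδ : δ' ≤ δ := min_le_left _ _
  have h1δ' : (0:ℝ) < 1 - δ' := by linarith
  set r : ℝ := (1 + δ') / (1 - δ') with hrdef
  have hr1 : 1 < r := by
    rw [hrdef, lt_div_iff₀ h1δ']; linarith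
  have hr0 : 0 < r := lt_trans one_pos hr1
  set s : ℝ := Real.sqrt r with hsdef
  have hs1 : 1 < s := by
    rw [hsdef]
    have : (1:ℝ) = Real.sqrt 1 := (Real.sqrt_one).symm
    rw [this]
    exact Real.sqrt_lt_sqrt (by norm_num) hr1
  have hs0 : 0 < s := lt_trans one_pos hs1
  have hs2 : s ^ 2 = r := Real.sq_sqrt hr0.le
  -- windows
  have hJ1 : ∀ k : ℕ, (1:ℝ) ≤ s ^ k := fun k => one_le_pow₀ hs1.le
  have hJlt : ∀ k : ℕ, s ^ k < s ^ (k+1) := fun k =>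
    pow_lt_pow_right₀ hs1 (Nat.lt_succ_self k)
  -- the good set
  have hSmeas : MeasurableSet {p : ℝ × ℝ | ε / 2 ≤ dfun p.1 p.2} :=
    measurableSet_le measurable_const hdmeas
  set bad : ℕ → Set (ℝ × ℝ) :=
    fun k => (Set.Icc (s ^ k) (s ^ (k+1)) ×ˢ (Set.univ : Set ℝ)) \
      {p : ℝ × ℝ | ε / 2 ≤ dfun p.1 p.2} with hbaddef
  have hbadmeas : ∀ k, MeasurableSet (bad k) := fun k =>
    (measurableSet_Icc.prod MeasurableSet.univ).diff hSmeas
  set h : ℕ → ℝ → ℝ≥0∞ := fun k θ => volume ((fun T => (T, θ)) ⁻¹' bad k) with hhdef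
  have hhmeas : ∀ k, Measurable (h k) := fun k =>
    measurable_measure_prodMk_right (hbadmeas k)
  set B : ℕ → Set ℝ := fun k => Pε ∩ {θ | h k θ = 0} with hBdef
  have hBmeas : ∀ k, MeasurableSet (B k) := fun k =>
    hPεmeas.inter ((hhmeas k) (measurableSet_singleton 0))
  have hBsub : ∀ k, B k ⊆ Set.Icc c d := fun k =>
    (Set.inter_subset_left).trans (hPεsub.trans hPsub)
  -- key : every point of Pε is in B k for some large k
  have key : ∀ K : ℕ, Pε ⊆ ⋃ k, ⋃ (_ : K ≤ k), B k := by
    intro K θ hθ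
    obtain ⟨Tn, hTn, hTn2⟩ := hb θ hθ
    obtain ⟨n, hn⟩ := (hTn.eventually_ge_atTop (max (s ^ K / (1 - δ')) 1)).exists
    set T := Tn n with hTdef
    have hT1 : s ^ K / (1 - δ') ≤ T := le_trans (le_max_left _ _) hn
    have hT2 : (1:ℝ) ≤ T := le_trans (le_max_right _ _) hn
    have hTpos : 0 < T := lt_of_lt_of_le one_pos hT2
    set x : ℝ := (1 - δ') * T with hxdef
    have hx1 : s ^ K ≤ x := by
      rw [hxdef, mul_comm]
      exact (div_le_iff₀ h1δ').mp hT1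
    have hxpos : 0 < x := lt_of_lt_of_le (pow_pos hs0 K) hx1
    have hxone : 1 ≤ x := le_trans (hJ1 K) hx1
    set L : ℝ := Real.logb s x with hLdef
    have hL0 : 0 ≤ L := Real.logb_nonneg hs1 hxone
    have hLK : (K:ℝ) ≤ L := by
      have h1 : Real.logb s (s ^ (K:ℝ)) = (K:ℝ) := Real.logb_rpow hs0 hs1.ne'
      have h2 : s ^ (K:ℝ) = s ^ K := Real.rpow_natCast s K
      rw [hLdef, ← h1, h2]
      exact Real.logb_le_logb_of_le hs1 (pow_pos hs0 K) hx1
    set k : ℕ := ⌈L⌉₊ with hkdef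
    have hkK : K ≤ k := by
      have : (K:ℝ) ≤ (k:ℝ) := le_trans hLK (Nat.le_ceil L)
      exact_mod_cast this
    have hLk : L ≤ (k:ℝ) := Nat.le_ceil L
    have hkL : (k:ℝ) < L + 1 := Nat.ceil_lt_add_one hL0
    have hsL : s ^ L = x := Real.rpow_logb hs0 hs1.ne' hxpos
    have hxk : x ≤ s ^ k := by
      calc x = s ^ L := hsL.symm
        _ ≤ s ^ ((k:ℝ)) := Real.rpow_le_rpow_left_iff hs1 |>.mpr hLk
        _ = s ^ k := Real.rpow_natCast s k
    have hk1 : s ^ (k+1) ≤ r * x := by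
      have h1 : s ^ ((k:ℝ) + 1) ≤ s ^ (L + 2) := by
        apply (Real.rpow_le_rpow_left_iff hs1).mpr
        linarith
      have h2 : s ^ (L + 2) = x * r := by
        rw [Real.rpow_add hs0, hsL]
        congr 1
        rw [← hs2]
        have := Real.rpow_natCast s 2
        simpa using this.symm
      have h3 : s ^ ((k:ℝ) + 1) = s ^ (k + 1) := by
        rw [← Real.rpow_natCast s (k+1)]
        norm_num
      rw [← h3]
      rw [h2, mul_comm] at h1
      exact h1
    -- window containment
    have hwin : ∀ T' ∈ Set.Icc (s ^ k) (s ^ (k+1)), ε / 2 ≤ dfun T' θ := by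
      intro T' hT'
      apply hTn2 n T'
      constructor
      · calc (1 - δ) * T ≤ (1 - δ') * T := by nlinarith
          _ ≤ s ^ k := hxk
          _ ≤ T' := hT'.1
      · calc T' ≤ s ^ (k+1) := hT'.2
          _ ≤ r * x := hk1
          _ = (1 + δ') * T := by rw [hxdef, hrdef]; field_simp
          _ ≤ (1 + δ) * T := by nlinarith
    -- θ ∈ B k
    have hhk : h k θ = 0 := by
      have : (fun T => (T, θ)) ⁻¹' bad k = ∅ := by
        ext T
        simp only [Set.mem_preimage, hbaddef, Set.mem_diff, Set.mem_prod, Set.mem_univ,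
          and_true, Set.mem_empty_iff_false, iff_false, Set.mem_setOf_eq, not_and, not_not]
        intro hT
        exact hwin T hT
      rw [hhdef]
      simp only [this, measure_empty]
    exact Set.mem_iUnion.mpr ⟨k, Set.mem_iUnion.mpr ⟨hkK, hθ, hhk⟩⟩
  -- choose a window with positive measure for each n
  have hex : ∀ n : ℕ, ∃ k, n ≤ k ∧ 0 < volume (B k) := by
    intro n
    by_contra hcon
    push_neg at hcon
    have hz : volume (⋃ k, ⋃ (_ : n ≤ k), B k) = 0 := by
      apply measure_iUnion_null
      intro k
      apply measure_iUnion_null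
      intro hk
      exact le_antisymm (hcon k hk) (zero_le)
    have : volume Pε ≤ volume (⋃ k, ⋃ (_ : n ≤ k), B k) := measure_mono (key n)
    rw [hz] at this
    exact absurd (le_antisymm this (zero_le)) (ne_of_gt hPεpos)
  choose kk hkk1 hkk2 using hex
  set A : ℕ → Set (ℝ × ℝ) :=
    fun n => Set.Icc (s ^ kk n) (s ^ (kk n + 1)) ×ˢ B (kk n) with hAdef
  have hAmeas : ∀ n, MeasurableSet (A n) := fun n =>
    measurableSet_Icc.prod (hBmeas (kk n))
  set cn : ℕ → ℝ≥0∞ := fun n => volume (A n) with hcndef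
  have hcn_eq : ∀ n, cn n = ENNReal.ofReal (s ^ (kk n + 1) - s ^ kk n) * volume (B (kk n)) := by
    intro n
    rw [hcndef]
    simp only [hAdef]
    rw [Measure.volume_eq_prod, Measure.prod_prod, Real.volume_Icc]
  have hcnpos : ∀ n, 0 < cn n := by
    intro n
    rw [hcn_eq n]
    apply ENNReal.mul_pos
    · simp only [ne_eq, ENNReal.ofReal_eq_zero, not_le]
      linarith [hJlt (kk n)]
    · exact (hkk2 n).ne'
  have hcnfin : ∀ n, cn n < ⊤ := by
    intro n
    rw [hcn_eq n]
    apply ENNReal.mul_lt_top ENNReal.ofReal_lt_top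
    calc volume (B (kk n)) ≤ volume (Set.Icc c d) := measure_mono (hBsub (kk n))
      _ < ⊤ := by rw [Real.volume_Icc]; exact ENNReal.ofReal_lt_top
  have hprob : ∀ n, IsProbabilityMeasure ((cn n)⁻¹ • volume.restrict (A n)) := by
    intro n
    constructor
    rw [Measure.smul_apply, Measure.restrict_apply_univ, smul_eq_mul]
    exact ENNReal.inv_mul_cancel (hcnpos n).ne' (hcnfin n).ne
  refine ⟨fun n => (cn n)⁻¹ • volume.restrict (A n), hprob, ?_, ?_, ?_, ?_⟩
  · -- absolute continuity
    intro n t ht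
    rw [Measure.smul_apply, smul_eq_mul]
    have h1 : volume.restrict (A n) t ≤ volume t := Measure.restrict_le_self t
    rw [ht] at h1
    rw [le_antisymm h1 (zero_le), mul_zero]
  · -- compact support
    intro n
    refine ⟨s ^ (kk n + 1), ?_⟩
    have hsub : A n ⊆ Set.Icc 1 (s ^ (kk n + 1)) ×ˢ Set.Icc c d := by
      rintro ⟨T, θ⟩ ⟨hT, hθ⟩
      exact ⟨⟨le_trans (hJ1 (kk n)) hT.1, hT.2⟩, hBsub (kk n) hθ⟩
    have hle : ((cn n)⁻¹ • volume.restrict (A n)) (Set.Icc 1 (s ^ (kk n+1)) ×ˢ Set.Icc c d) ≤ 1 := by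
      haveI := hprob n
      exact prob_le_one
    have hge : (1:ℝ≥0∞) ≤ ((cn n)⁻¹ • volume.restrict (A n)) (Set.Icc 1 (s ^ (kk n+1)) ×ˢ Set.Icc c d) := by
      have h1 : ((cn n)⁻¹ • volume.restrict (A n)) (A n) = 1 := by
        rw [Measure.smul_apply, Measure.restrict_apply (hAmeas n), Set.inter_self, smul_eq_mul,
          ENNReal.inv_mul_cancel (hcnpos n).ne' (hcnfin n).ne]
      rw [← h1]
      exact measure_mono hsub
    exact le_antisymm hle hge
  · -- escape to infinity
    intro M
    have hev : ∀ᶠ n in atTop,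
        ((cn n)⁻¹ • volume.restrict (A n)) (Set.Icc 1 M ×ˢ Set.Icc c d) = 0 := by
      have hsn : Tendsto (fun n : ℕ => s ^ n) atTop atTop :=
        tendsto_pow_atTop_atTop_of_one_lt hs1
      filter_upwards [hsn.eventually_gt_atTop M] with n hn
      have hM : M < s ^ kk n :=
        lt_of_lt_of_le hn (pow_le_pow_right₀ hs1.le (hkk1 n))
      have hdisj : Set.Icc (1:ℝ) M ∩ Set.Icc (s ^ kk n) (s ^ (kk n + 1)) = ∅ := by
        ext T
        simp only [Set.mem_inter_iff, Set.mem_Icc, Set.mem_empty_iff_false, iff_false, not_and]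
        intro h1 h2
        exfalso
        linarith [h1.2]
      rw [Measure.smul_apply, Measure.restrict_apply (measurableSet_Icc.prod measurableSet_Icc),
        smul_eq_mul]
      have : (Set.Icc (1:ℝ) M ×ˢ Set.Icc c d) ∩ A n = ∅ := by
        rw [hAdef]
        rw [Set.prod_inter_prod, hdisj, Set.empty_prod]
      rw [this, measure_empty, mul_zero]
    exact Tendsto.congr' (hev.mono fun n hn => hn.symm) tendsto_const_nhds
  · -- liminf positive
    have hone : ∀ n, ((cn n)⁻¹ • volume.restrict (A n)) {p : ℝ × ℝ | ε / 2 ≤ dfun p.1 p.2} = 1 := by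
      intro n
      haveI := hprob n
      rw [← prob_compl_eq_zero_iff hSmeas]
      rw [Measure.smul_apply, Measure.restrict_apply hSmeas.compl, smul_eq_mul]
      have hzero : volume ({p : ℝ × ℝ | ε / 2 ≤ dfun p.1 p.2}ᶜ ∩ A n) = 0 := by
        rw [Measure.volume_eq_prod,
          Measure.prod_apply_symm (hSmeas.compl.inter (hAmeas n))]
        have hsec : ∀ θ : ℝ,
            volume ((fun T => (T, θ)) ⁻¹' ({p : ℝ × ℝ | ε / 2 ≤ dfun p.1 p.2}ᶜ ∩ A n)) = 0 := by
          intro θ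
          by_cases hθ : θ ∈ B (kk n)
          · have hsub : (fun T => (T, θ)) ⁻¹' ({p : ℝ × ℝ | ε / 2 ≤ dfun p.1 p.2}ᶜ ∩ A n) ⊆
                (fun T => (T, θ)) ⁻¹' bad (kk n) := by
              intro T hT
              simp only [Set.mem_preimage, Set.mem_inter_iff, Set.mem_compl_iff,
                Set.mem_setOf_eq, hAdef, Set.mem_prod] at hT
              simp only [Set.mem_preimage, hbaddef, Set.mem_diff, Set.mem_prod, Set.mem_univ,
                and_true, Set.mem_setOf_eq]
              exact ⟨hT.2.1, hT.1⟩
            have : volume ((fun T => (T, θ)) ⁻¹' ({p : ℝ × ℝ | ε / 2 ≤ dfun p.1 p.2}ᶜ ∩ A n)) ≤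
                volume ((fun T => (T, θ)) ⁻¹' bad (kk n)) := measure_mono hsub
            have hB0 : h (kk n) θ = 0 := hθ.2
            rw [hhdef] at hB0
            exact le_antisymm (le_trans this (le_of_eq hB0)) (zero_le)
          · have : (fun T => (T, θ)) ⁻¹' ({p : ℝ × ℝ | ε / 2 ≤ dfun p.1 p.2}ᶜ ∩ A n) = ∅ := by
              ext T
              simp only [Set.mem_preimage, Set.mem_inter_iff, Set.mem_compl_iff,
                Set.mem_setOf_eq, hAdef, Set.mem_prod, Set.mem_empty_iff_false, iff_false]
              rintro ⟨-, -, hT2⟩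
              exact hθ hT2
            rw [this, measure_empty]
        rw [lintegral_congr hsec, lintegral_zero]
      rw [hzero, mul_zero]
    have : (fun n => ((cn n)⁻¹ • volume.restrict (A n)) {p : ℝ × ℝ | ε / 2 ≤ dfun p.1 p.2})
        = fun _ => (1:ℝ≥0∞) := funext hone
    rw [this, liminf_const]
    exact zero_lt_one
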